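/- Let β < 0, 0 < δ < 1, and φ(v) = (1 - U_δ^{β/2}(v)) μ(v)^{1/2} where U_δ(v) = (1+δ²|v|²)^{1/2} and μ(v) = exp(-|v|²/2). Then |φ(v)| ≤ C |β| δ μ(v)^{1/4} and |∇φ(v)| ≤ C |β| δ μ(v)^{1/4} for all v ∈ ℝ³, with an absolute constant C. -/

import Mathlib

noncomputable def quantumMu (v : EuclideanSpace ℝ (Fin 3)) : ℝ := Real.exp (-‖v‖^2 / 2)

/-- The weight function `U_δ(v) = (1 + δ²|v|²)^{1/2}`. -/
noncomputable def Udelta (δ : ℝ) (v : EuclideanSpace ℝ (Fin 3)) : ℝ :=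
  (1 + δ^2 * ‖v‖^2) ^ ((1:ℝ)/2)

lemma aux_log (x : ℝ) (hx : 0 ≤ x) : Real.log (1 + x^2) ≤ 2*x := by
  have h1 : (1:ℝ) + x^2 ≤ (1+x)^2 := by nlinarith
  have h2 : Real.log (1 + x^2) ≤ Real.log ((1+x)^2) :=
    Real.log_le_log (by positivity) h1
  have h3 : Real.log ((1+x)^2) = 2 * Real.log (1+x) := by
    rw [Real.log_pow]; norm_num
  have h4 : Real.log (1+x) ≤ x := by
    have := Real.log_le_sub_one_of_pos (x := 1+x) (by positivity)
    linarith
  linarith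

lemma aux_one_sub_nonneg (s x : ℝ) (hs : 0 ≤ s) : 0 ≤ 1 - (1 + x^2) ^ (-s) := by
  have : (1 + x^2 : ℝ) ^ (-s) ≤ 1 :=
    Real.rpow_le_one_of_one_le_of_nonpos (by nlinarith [sq_nonneg x]) (by linarith)
  linarith

lemma aux_one_sub_le (s x : ℝ) (hs : 0 ≤ s) (hx : 0 ≤ x) :
    1 - (1 + x^2) ^ (-s) ≤ 2 * s * x := by
  have hb : (0:ℝ) < 1 + x^2 := by positivity
  have h1 : (1 + x^2 : ℝ) ^ (-s) = Real.exp (Real.log (1 + x^2) * (-s)) := by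
    rw [Real.rpow_def_of_pos hb]
  have h2 : Real.log (1 + x^2) * (-s) + 1 ≤ Real.exp (Real.log (1 + x^2) * (-s)) :=
    Real.add_one_le_exp _
  have h3 := aux_log x hx
  have h4 : 0 ≤ Real.log (1 + x^2) := Real.log_nonneg (by nlinarith [sq_nonneg x])
  nlinarith [h2, h1]

lemma aux_xexp (x : ℝ) (hx : 0 ≤ x) : x * Real.exp (-x^2/8) ≤ 2 := by
  have h := Real.add_one_le_exp (x^2/8)
  have hp := Real.exp_pos (x^2/8)
  have he : Real.exp (-x^2/8) = (Real.exp (x^2/8))⁻¹ := by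
    rw [← Real.exp_neg]; ring_nf
  rw [he, ← div_eq_mul_inv, div_le_iff₀ hp]
  nlinarith [sq_nonneg (x-2)]

lemma aux_texp (t : ℝ) (ht : 0 ≤ t) : t * Real.exp (-t/8) ≤ 8 := by
  have h := Real.add_one_le_exp (t/8)
  have hp := Real.exp_pos (t/8)
  have he : Real.exp (-t/8) = (Real.exp (t/8))⁻¹ := by
    rw [← Real.exp_neg]; ring_nf
  rw [he, ← div_eq_mul_inv, div_le_iff₀ hp]
  nlinarith

noncomputable def gfun (a p : ℝ) (t : ℝ) : ℝ := (1 - (1 + a*t) ^ p) * Real.exp (-t/4)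

lemma gfun_deriv (a p t : ℝ) (h : 0 < 1 + a*t) :
    HasDerivAt (gfun a p)
      (-(p * (1+a*t)^(p-1) * a) * Real.exp (-t/4)
        + (1 - (1+a*t)^p) * (Real.exp (-t/4) * (-1/4))) t := by
  have h1 : HasDerivAt (fun t : ℝ => 1 + a*t) a t := by
    simpa using ((hasDerivAt_id t).const_mul a).const_add 1
  have h2 : HasDerivAt (fun t : ℝ => (1 + a*t) ^ p) (a * p * (1+a*t)^(p-1)) t :=
    h1.rpow_const (Or.inl h.ne')
  have h3 : HasDerivAt (fun t : ℝ => 1 - (1 + a*t) ^ p) (-(a * p * (1+a*t)^(p-1))) t :=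
    h2.const_sub 1
  have h4 : HasDerivAt (fun t : ℝ => Real.exp (-t/4)) (Real.exp (-t/4) * (-1/4)) t := by
    have : HasDerivAt (fun t : ℝ => -t/4) (-1/4) t := by
      simpa using (hasDerivAt_id t).neg.div_const 4
    exact this.exp
  exact (h3.mul h4).congr_deriv (by ring)

lemma phi_eq (β δ : ℝ) (w : EuclideanSpace ℝ (Fin 3)) :
    (1 - (Udelta δ w) ^ (β/2)) * (quantumMu w) ^ ((1:ℝ)/2) = gfun (δ^2) (β/4) (‖w‖^2) := by
  unfold Udelta quantumMu gfun
  have hb : (0:ℝ) ≤ 1 + δ^2 * ‖w‖^2 := by positivity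
  rw [← Real.rpow_mul hb, ← Real.exp_mul]
  norm_num
  ring_nf

lemma grad_at (β δ : ℝ) (v : EuclideanSpace ℝ (Fin 3)) (h : 0 < 1 + δ^2 * ‖v‖^2) :
    HasGradientAt (fun w => (1 - (Udelta δ w) ^ (β/2)) * (quantumMu w) ^ ((1:ℝ)/2))
      ((2 * (-(β/4 * (1+δ^2*‖v‖^2)^(β/4-1) * δ^2) * Real.exp (-‖v‖^2/4)
        + (1 - (1+δ^2*‖v‖^2)^(β/4)) * (Real.exp (-‖v‖^2/4) * (-1/4)))) • v) v := by
  set c := -(β/4 * (1+δ^2*‖v‖^2)^(β/4-1) * δ^2) * Real.exp (-‖v‖^2/4)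
        + (1 - (1+δ^2*‖v‖^2)^(β/4)) * (Real.exp (-‖v‖^2/4) * (-1/4)) with hc
  have hN : HasFDerivAt (fun w : EuclideanSpace ℝ (Fin 3) => ‖w‖^2)
      (2 • (innerSL ℝ v)) v := (hasStrictFDerivAt_norm_sq v).hasFDerivAt
  have hg : HasDerivAt (gfun (δ^2) (β/4)) c (‖v‖^2) := by
    have := gfun_deriv (δ^2) (β/4) (‖v‖^2) (by rwa [mul_comm] at h ⊢)
    convert this using 2
  have hcomp : HasFDerivAt (fun w : EuclideanSpace ℝ (Fin 3) => gfun (δ^2) (β/4) (‖w‖^2))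
      (c • (2 • (innerSL ℝ v))) v := by have := hg.comp_hasFDerivAt v hN; exact this
  have heq : (fun w : EuclideanSpace ℝ (Fin 3) =>
      (1 - (Udelta δ w) ^ (β/2)) * (quantumMu w) ^ ((1:ℝ)/2))
      = fun w => gfun (δ^2) (β/4) (‖w‖^2) := funext fun w => phi_eq β δ w
  rw [heq, hasGradientAt_iff_hasFDerivAt]
  refine hcomp.congr_fderiv ?_
  ext w
  simp [InnerProductSpace.toDual_apply_apply, real_inner_smul_left, mul_comm]
  ring

lemma main1 (β δ x : ℝ) (hβ : β < 0) (hδ : 0 < δ) (hx : 0 ≤ x) :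
    (1 - (1 + δ^2*x^2)^(β/4)) * Real.exp (-x^2/4) ≤ 3 * |β| * δ * Real.exp (-x^2/8) := by
  have habs : |β| = -β := abs_of_neg hβ
  have hE8 : (0:ℝ) < Real.exp (-x^2/8) := Real.exp_pos _
  have hE44 : Real.exp (-x^2/4) = Real.exp (-x^2/8) * Real.exp (-x^2/8) := by
    rw [← Real.exp_add]; congr 1; ring
  have hup : 1 - (1 + δ^2*x^2)^(β/4) ≤ 2 * (-(β/4)) * (δ*x) := by
    have h := aux_one_sub_le (-(β/4)) (δ*x) (by linarith) (by positivity)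
    rw [neg_neg] at h
    rwa [show (1 + (δ*x)^2 : ℝ) = 1 + δ^2*x^2 by ring] at h
  have hxe := aux_xexp x hx
  have hK : (0:ℝ) ≤ (-β) * δ * Real.exp (-x^2/8) :=
    mul_nonneg (mul_nonneg (by linarith) hδ.le) hE8.le
  calc (1 - (1 + δ^2*x^2)^(β/4)) * Real.exp (-x^2/4)
      ≤ (2 * (-(β/4)) * (δ*x)) * Real.exp (-x^2/4) :=
        mul_le_mul_of_nonneg_right hup (Real.exp_pos _).le
    _ = ((-β)/2 * δ) * ((x * Real.exp (-x^2/8)) * Real.exp (-x^2/8)) := by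
        rw [hE44]; ring
    _ ≤ ((-β)/2 * δ) * (2 * Real.exp (-x^2/8)) :=
        mul_le_mul_of_nonneg_left (mul_le_mul_of_nonneg_right hxe hE8.le)
          (mul_nonneg (by linarith) hδ.le)
    _ ≤ 3 * |β| * δ * Real.exp (-x^2/8) := by
        rw [habs]; nlinarith [hK]

lemma main1_nonneg (β δ x : ℝ) (hβ : β < 0) :
    0 ≤ (1 - (1 + δ^2*x^2)^(β/4)) * Real.exp (-x^2/4) := by
  have h := aux_one_sub_nonneg (-(β/4)) (δ*x) (by linarith)
  rw [neg_neg, show (1 + (δ*x)^2 : ℝ) = 1 + δ^2*x^2 by ring] at h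
  exact mul_nonneg h (Real.exp_pos _).le

lemma main2 (β δ x : ℝ) (hβ : β < 0) (hδ : 0 < δ) (hx : 0 ≤ x) :
    |2 * (-(β/4 * (1+δ^2*x^2)^(β/4-1) * δ^2) * Real.exp (-x^2/4)
        + (1 - (1+δ^2*x^2)^(β/4)) * (Real.exp (-x^2/4) * (-1/4)))| * x
      ≤ 3 * |β| * δ * Real.exp (-x^2/8) := by
  have habs : |β| = -β := abs_of_neg hβ
  have hb1 : (1:ℝ) ≤ 1 + δ^2*x^2 := by nlinarith [sq_nonneg (δ*x)]
  have hbpos : (0:ℝ) < 1 + δ^2*x^2 := by linarith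
  have hE4 : (0:ℝ) < Real.exp (-x^2/4) := Real.exp_pos _
  have hE8 : (0:ℝ) < Real.exp (-x^2/8) := Real.exp_pos _
  have hE44 : Real.exp (-x^2/4) = Real.exp (-x^2/8) * Real.exp (-x^2/8) := by
    rw [← Real.exp_add]; congr 1; ring
  have hE48 : Real.exp (-x^2/4) ≤ Real.exp (-x^2/8) := by
    apply Real.exp_le_exp.mpr; nlinarith [sq_nonneg x]
  have hrp : (0:ℝ) ≤ (1+δ^2*x^2)^(β/4-1) := Real.rpow_nonneg (by linarith) _
  have hup : 1 - (1 + δ^2*x^2)^(β/4) ≤ 2 * (-(β/4)) * (δ*x) := by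
    have h := aux_one_sub_le (-(β/4)) (δ*x) (by linarith) (by positivity)
    rw [neg_neg] at h
    rwa [show (1 + (δ*x)^2 : ℝ) = 1 + δ^2*x^2 by ring] at h
  have hlow : 0 ≤ 1 - (1 + δ^2*x^2)^(β/4) := by
    have h := aux_one_sub_nonneg (-(β/4)) (δ*x) (by linarith)
    rwa [neg_neg, show (1 + (δ*x)^2 : ℝ) = 1 + δ^2*x^2 by ring] at h
  have hbinv : (1+δ^2*x^2)^(β/4-1) ≤ (1+δ^2*x^2)⁻¹ := by
    have h := Real.rpow_le_rpow_of_exponent_le hb1 (show β/4-1 ≤ -1 by linarith)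
    rwa [Real.rpow_neg_one] at h
  have hkey : δ^2 * x * (1+δ^2*x^2)⁻¹ ≤ δ/2 := by
    rw [← div_eq_mul_inv, div_le_iff₀ hbpos]
    nlinarith [sq_nonneg (1 - δ*x)]
  set A := -(β/4 * (1+δ^2*x^2)^(β/4-1) * δ^2) * Real.exp (-x^2/4) with hA
  set B := (1 - (1+δ^2*x^2)^(β/4)) * (Real.exp (-x^2/4) * (-1/4)) with hB
  have hA0 : 0 ≤ A := by
    apply mul_nonneg _ hE4.le
    have h := mul_nonneg (mul_nonneg (show (0:ℝ) ≤ -(β/4) by linarith) hrp) (sq_nonneg δ)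
    linarith [h]
  have hB0 : B ≤ 0 := by
    apply mul_nonpos_of_nonneg_of_nonpos hlow
    linarith [hE4.le]
  have habs2 : |2 * (A + B)| ≤ 2 * (A + (-B)) := by
    rw [abs_mul]
    have h := abs_add_le A B
    rw [abs_of_nonneg hA0, abs_of_nonpos hB0] at h
    have h2 : |(2:ℝ)| = 2 := by norm_num
    nlinarith [h]
  have hK : (0:ℝ) ≤ (-β) * δ * Real.exp (-x^2/8) :=
    mul_nonneg (mul_nonneg (by linarith) hδ.le) hE8.le
  have hxA : A * x ≤ (-β)/8 * δ * Real.exp (-x^2/8) := by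
    have step1 : A * x = (-(β/4)) * (δ^2 * x * (1+δ^2*x^2)^(β/4-1)) * Real.exp (-x^2/4) := by
      rw [hA]; ring
    rw [step1]
    have hs2 : δ^2 * x * (1+δ^2*x^2)^(β/4-1) ≤ δ/2 :=
      (mul_le_mul_of_nonneg_left hbinv (by positivity : (0:ℝ) ≤ δ^2 * x)).trans hkey
    calc (-(β/4)) * (δ^2 * x * (1+δ^2*x^2)^(β/4-1)) * Real.exp (-x^2/4)
        ≤ (-(β/4)) * (δ/2) * Real.exp (-x^2/4) :=
          mul_le_mul_of_nonneg_right
            (mul_le_mul_of_nonneg_left hs2 (by linarith : (0:ℝ) ≤ -(β/4))) hE4.le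
      _ ≤ (-(β/4)) * (δ/2) * Real.exp (-x^2/8) :=
          mul_le_mul_of_nonneg_left hE48
            (mul_nonneg (by linarith) (by linarith))
      _ = (-β)/8 * δ * Real.exp (-x^2/8) := by ring
  have hxB : (-B) * x ≤ (-β) * δ * Real.exp (-x^2/8) := by
    have hte := aux_texp (x^2) (sq_nonneg x)
    have step1 : (-B) * x = (1/4 * x) * ((1 - (1+δ^2*x^2)^(β/4)) * Real.exp (-x^2/4)) := by
      rw [hB]; ring
    rw [step1]
    calc (1/4 * x) * ((1 - (1+δ^2*x^2)^(β/4)) * Real.exp (-x^2/4))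
        ≤ (1/4 * x) * ((2 * (-(β/4)) * (δ*x)) * Real.exp (-x^2/4)) :=
          mul_le_mul_of_nonneg_left (mul_le_mul_of_nonneg_right hup hE4.le)
            (by positivity)
      _ = ((-β)/8 * δ) * ((x^2 * Real.exp (-x^2/8)) * Real.exp (-x^2/8)) := by
          rw [hE44]; ring
      _ ≤ ((-β)/8 * δ) * (8 * Real.exp (-x^2/8)) :=
          mul_le_mul_of_nonneg_left (mul_le_mul_of_nonneg_right hte hE8.le)
            (mul_nonneg (by linarith) hδ.le)
      _ = (-β) * δ * Real.exp (-x^2/8) := by ring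
  calc |2 * (A + B)| * x ≤ (2 * (A + (-B))) * x :=
        mul_le_mul_of_nonneg_right habs2 hx
    _ = 2 * (A * x) + 2 * ((-B) * x) := by ring
    _ ≤ 2 * ((-β)/8 * δ * Real.exp (-x^2/8)) + 2 * ((-β) * δ * Real.exp (-x^2/8)) := by
        have := hxA; have := hxB; linarith
    _ ≤ 3 * |β| * δ * Real.exp (-x^2/8) := by
        rw [habs]; linarith [hK]

theorem stmt_15 :
    ∃ C : ℝ, 0 < C ∧ ∀ β δ : ℝ, β < 0 → 0 < δ → δ < 1 →
      ∀ v : EuclideanSpace ℝ (Fin 3),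
        |(1 - (Udelta δ v) ^ (β/2)) * (quantumMu v) ^ ((1:ℝ)/2)| ≤
          C * |β| * δ * (quantumMu v) ^ ((1:ℝ)/4) ∧
        ‖gradient (fun w => (1 - (Udelta δ w) ^ (β/2)) * (quantumMu w) ^ ((1:ℝ)/2)) v‖ ≤
          C * |β| * δ * (quantumMu v) ^ ((1:ℝ)/4) := by
  refine ⟨3, by norm_num, fun β δ hβ hδ hδ1 v => ?_⟩
  have hbpos : (0:ℝ) < 1 + δ^2 * ‖v‖^2 := by positivity
  have hmu4 : (quantumMu v) ^ ((1:ℝ)/4) = Real.exp (-‖v‖^2/8) := by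
    unfold quantumMu
    rw [← Real.exp_mul]
    congr 1; ring
  constructor
  · rw [phi_eq, hmu4]
    unfold gfun
    rw [abs_of_nonneg (main1_nonneg β δ ‖v‖ hβ)]
    exact main1 β δ ‖v‖ hβ hδ (norm_nonneg v)
  · rw [(grad_at β δ v hbpos).gradient, norm_smul, Real.norm_eq_abs, hmu4]
    exact main2 β δ ‖v‖ hβ hδ (norm_nonneg v)
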